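/- Let n ≥ 3 and let α, β be positive roots of A_{n−1} (not necessarily distinct). If w ∈ S_n is such that w·(−α−β) = w(−α−β+ρ) − ρ is dominant, then w·(−α−β) = 0. -/

import Mathlib

/-- ρ = (n−1, n−2, …, 1, 0) for type A_{n−1} realized in ℤ^n. -/
def weylRho (n : ℕ) : Fin n → ℤ := fun i => (n : ℤ) - 1 - (i : ℕ)

/-- The action of `w ∈ S_n` on weights: `w(λ)_i = λ_{w⁻¹(i)}`. -/
def wAct {n : ℕ} (w : Equiv.Perm (Fin n)) (lam : Fin n → ℤ) : Fin n → ℤ :=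
  fun i => lam (w⁻¹ i)

/-- The dot action `w·λ = w(λ+ρ) − ρ`. -/
def dotAct {n : ℕ} (w : Equiv.Perm (Fin n)) (lam : Fin n → ℤ) : Fin n → ℤ :=
  fun i => lam (w⁻¹ i) + weylRho n (w⁻¹ i) - weylRho n i

/-- `λ` is dominant iff `λ_1 ≥ λ_2 ≥ ⋯ ≥ λ_n`. -/
def IsDominant {n : ℕ} (lam : Fin n → ℤ) : Prop :=
  ∀ i j : Fin n, i ≤ j → lam j ≤ lam i

/-- The root `e_i − e_j`. -/
def posRoot {n : ℕ} (i j : Fin n) : Fin n → ℤ :=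
  fun k => (if k = i then 1 else 0) - (if k = j then 1 else 0)

/-- Positive roots of A_{n−1}: `e_i − e_j` with `i < j`. -/
def IsPosRoot {n : ℕ} (x : Fin n → ℤ) : Prop :=
  ∃ i j : Fin n, i < j ∧ x = posRoot i j

/-- Negative roots of A_{n−1}. -/
def IsNegRoot {n : ℕ} (x : Fin n → ℤ) : Prop :=
  ∃ i j : Fin n, i < j ∧ x = -(posRoot i j)

/-- The length ℓ(w): the number of positive roots sent to negative roots by `w`,
i.e. the number of inversions of `w`. -/
def weylLen {n : ℕ} (w : Equiv.Perm (Fin n)) : ℕ :=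
  (Finset.univ.filter (fun p : Fin n × Fin n => p.1 < p.2 ∧ w p.2 < w p.1)).card

lemma aux_bounds (n : ℕ) (hn : 3 ≤ n) (a b c d : Fin n) (hab : a < b) (hcd : c < d)
    (f : Fin n → ℤ)
    (hf : ∀ k : Fin n, f k = (n : ℤ) - 1 - (k : ℕ) - posRoot a b k - posRoot c d k)
    (hinj : Function.Injective f) :
    ∀ k : Fin n, 0 ≤ f k ∧ f k ≤ (n : ℤ) - 1 := by
  have hab' : (a : ℕ) < (b : ℕ) := hab
  have hcd' : (c : ℕ) < (d : ℕ) := hcd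
  -- exceptional case 1 : b = d = 1 is impossible
  have hexc1 : ¬ ((b : ℕ) = 1 ∧ (d : ℕ) = 1) := by
    rintro ⟨hb1, hd1⟩
    have ha0 : (a : ℕ) = 0 := by omega
    have hc0 : (c : ℕ) = 0 := by omega
    set k0 : Fin n := ⟨0, by omega⟩ with hk0
    set k2 : Fin n := ⟨2, by omega⟩ with hk2
    have e0 : f k0 = (n : ℤ) - 3 := by
      rw [hf]
      have h1 : k0 = a := by apply Fin.ext; simpa using ha0.symm
      have h2 : k0 ≠ b := by intro h; rw [h] at hk0; simp [Fin.ext_iff, hb1] at hk0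
      have h3 : k0 = c := by apply Fin.ext; simpa using hc0.symm
      have h4 : k0 ≠ d := by intro h; rw [h] at hk0; simp [Fin.ext_iff, hd1] at hk0
      simp only [posRoot, if_pos h1, if_neg h2, if_pos h3, if_neg h4]
      rw [hk0]
      push_cast
      ring
    have e2 : f k2 = (n : ℤ) - 3 := by
      rw [hf]
      have h1 : k2 ≠ a := by simp [Fin.ext_iff, ha0]
      have h2 : k2 ≠ b := by simp [Fin.ext_iff, hb1, hk2]
      have h3 : k2 ≠ c := by simp [Fin.ext_iff, hc0]
      have h4 : k2 ≠ d := by simp [Fin.ext_iff, hd1, hk2]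
      simp only [posRoot, if_neg h1, if_neg h2, if_neg h3, if_neg h4, hk2]
      push_cast
      omega
    have : k0 = k2 := hinj (e0.trans e2.symm)
    simp [Fin.ext_iff, hk0, hk2] at this
  -- exceptional case 2 : a = c = n - 2 is impossible
  have hexc2 : ¬ ((a : ℕ) = n - 2 ∧ (c : ℕ) = n - 2) := by
    rintro ⟨ha2, hc2⟩
    have hb1 : (b : ℕ) = n - 1 := by have := b.isLt; omega
    have hd1 : (d : ℕ) = n - 1 := by have := d.isLt; omega
    set k0 : Fin n := ⟨n - 1, by omega⟩ with hk0
    set k2 : Fin n := ⟨n - 3, by omega⟩ with hk2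
    have e0 : f k0 = 2 := by
      rw [hf]
      have h1 : k0 ≠ a := by simp [Fin.ext_iff, ha2, hk0]; omega
      have h2 : k0 = b := by apply Fin.ext; simpa using hb1.symm
      have h3 : k0 ≠ c := by simp [Fin.ext_iff, hc2]; omega
      have h4 : k0 = d := by apply Fin.ext; simpa using hd1.symm
      simp only [posRoot, if_neg h1, if_pos h2, if_neg h3, if_pos h4, hk0]
      push_cast
      omega
    have e2 : f k2 = 2 := by
      rw [hf]
      have h1 : k2 ≠ a := by simp [Fin.ext_iff, ha2, hk2]; omega
      have h2 : k2 ≠ b := by simp [Fin.ext_iff, hb1, hk2]; omega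
      have h3 : k2 ≠ c := by simp [Fin.ext_iff, hc2]; omega
      have h4 : k2 ≠ d := by simp [Fin.ext_iff, hd1]; omega
      simp only [posRoot, if_neg h1, if_neg h2, if_neg h3, if_neg h4, hk2]
      push_cast
      omega
    have : k0 = k2 := hinj (e0.trans e2.symm)
    simp [Fin.ext_iff, hk0, hk2] at this
    omega
  intro k
  have hk := k.isLt
  rw [hf]
  unfold posRoot
  by_cases h1 : k = a <;> by_cases h2 : k = b <;> by_cases h3 : k = c <;> by_cases h4 : k = d <;>
    simp only [h1, h2, h3, h4, if_pos, if_neg, if_true, if_false] <;>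
    simp_all [Fin.ext_iff] <;> omega

/-- For n ≥ 3 and positive roots α, β of A_{n−1} (not necessarily distinct),
if w·(−α−β) is dominant then it is zero. -/
theorem dot_neg_two_roots_dominant_eq_zero (n : ℕ) (hn : 3 ≤ n) (α β : Fin n → ℤ)
    (hα : IsPosRoot α) (hβ : IsPosRoot β) (w : Equiv.Perm (Fin n))
    (hdom : IsDominant (dotAct w (-α - β))) :
    dotAct w (-α - β) = 0 := by
  obtain ⟨a, b, hab, rfl⟩ := hα
  obtain ⟨c, d, hcd, rfl⟩ := hβ
  set lam : Fin n → ℤ := -posRoot a b - posRoot c d with hlam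
  set f : Fin n → ℤ := fun k => lam k + weylRho n k with hfdef
  have hfval : ∀ k : Fin n, f k = (n : ℤ) - 1 - (k : ℕ) - posRoot a b k - posRoot c d k := by
    intro k; simp [hfdef, hlam, weylRho]; ring
  set g : Fin n → ℤ := fun i => f (w⁻¹ i) with hgdef
  have hdot : ∀ i, dotAct w lam i = g i - weylRho n i := by
    intro i; simp [dotAct, hgdef, hfdef]
  -- g is strictly antitone
  have hganti : StrictAnti g := by
    intro i j hij
    have h1 : dotAct w lam j ≤ dotAct w lam i := hdom i j (le_of_lt hij)
    have h2 : weylRho n j < weylRho n i := by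
      have : (i : ℕ) < (j : ℕ) := hij
      simp only [weylRho]; omega
    have := hdot i; have := hdot j
    omega
  have hginj : Function.Injective g := hganti.injective
  have hfinj : Function.Injective f := by
    intro x y hxy
    have : g (w x) = g (w y) := by simp [hgdef, hxy]
    exact w.injective (hginj this)
  have hbounds := aux_bounds n hn a b c d hab hcd f hfval hfinj
  -- the image finset
  set s : Finset ℤ := Finset.Icc 0 ((n : ℤ) - 1) with hs
  have hcards : s.card = n := by
    rw [hs, Int.card_Icc]
    omega
  have himf : Finset.image f Finset.univ = s := by
    apply Finset.eq_of_subset_of_card_le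
    · intro x hx
      obtain ⟨k, _, rfl⟩ := Finset.mem_image.mp hx
      rw [hs, Finset.mem_Icc]
      exact hbounds k
    · rw [hcards, Finset.card_image_of_injective _ hfinj, Finset.card_univ, Fintype.card_fin]
  have hρinj : Function.Injective (weylRho n) := by
    intro x y hxy
    simp only [weylRho] at hxy
    exact Fin.ext (by omega)
  have himρ : Finset.image (weylRho n) Finset.univ = s := by
    apply Finset.eq_of_subset_of_card_le
    · intro x hx
      obtain ⟨k, _, rfl⟩ := Finset.mem_image.mp hx
      rw [hs, Finset.mem_Icc]
      have := k.isLt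
      simp only [weylRho]
      omega
    · rw [hcards, Finset.card_image_of_injective _ hρinj, Finset.card_univ, Fintype.card_fin]
  have hrangefg : Set.range g = Set.range f := by
    ext x
    constructor
    · rintro ⟨i, rfl⟩; exact ⟨w⁻¹ i, rfl⟩
    · rintro ⟨k, rfl⟩; exact ⟨w k, by simp [hgdef]⟩
  have hrange : Set.range g = Set.range (weylRho n) := by
    have h1 : Set.range f = (s : Set ℤ) := by
      rw [← himf, Finset.coe_image, Finset.coe_univ, Set.image_univ]
    have h2 : Set.range (weylRho n) = (s : Set ℤ) := by
      rw [← himρ, Finset.coe_image, Finset.coe_univ, Set.image_univ]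
    rw [hrangefg, h1, h2]
  have hρanti : StrictAnti (weylRho n) := by
    intro i j hij
    have : (i : ℕ) < (j : ℕ) := hij
    simp only [weylRho]; omega
  have hgρ : g = weylRho n := (hganti.range_inj hρanti).mp hrange
  funext i
  have := hdot i
  rw [hgρ] at this
  simpa using this
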